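/- arXiv:1902.08521 — 2 statements merged into one kernel-verified Lean document; each statement's English description precedes it below -/
import Mathlib

section
/- For every p ∈ [1, ∞) there is a constant C_p such that for all smooth functions f, g on the torus T^d and every positive integer λ, one has | ‖f · g_λ‖_{L^p(T^d)} - ‖f‖_{L^p(T^d)} ‖g‖_{L^p(T^d)} | ≤ (C_p / λ^{1/p}) ‖f‖_{C^1} ‖g‖_{L^p(T^d)}, where g_λ(x) := g(λx). -/
open MeasureTheory Finset
open scoped ENNReal RealInnerProductSpace

noncomputable section

/-- `ℝ^d` with the Euclidean norm. -/
abbrev Ed (d : ℕ) : Type := EuclideanSpace ℝ (Fin d)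

/-- The fundamental domain `[0,1)^d` of the flat torus `𝕋^d = ℝ^d/ℤ^d`. -/
def cube (d : ℕ) : Set (Ed d) := {x | ∀ i, x i ∈ Set.Ico (0:ℝ) 1}

/-- Lebesgue measure restricted to the fundamental domain (i.e. the measure of `𝕋^d`). -/
def cubeVol (d : ℕ) : Measure (Ed d) := (volume : Measure (Ed d)).restrict (cube d)

/-- An integer vector, viewed as an element of `ℝ^d`. -/
def intVec (d : ℕ) (k : Fin d → ℤ) : Ed d := WithLp.toLp 2 (fun i => (k i : ℝ))

/-- A function on `ℝ^d` is `ℤ^d`-periodic, i.e. a function on the torus `𝕋^d`. -/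
def PeriodicZd {F : Type*} (d : ℕ) (f : Ed d → F) : Prop :=
  ∀ (x : Ed d) (k : Fin d → ℤ), f (x + intVec d k) = f x

/-- The `L^q(𝕋^d)` norm of a (periodic) function. -/
def lpN (d : ℕ) (q : ℝ≥0∞) {F : Type*} [NormedAddCommGroup F] (f : Ed d → F) : ℝ :=
  (eLpNorm f q (cubeVol d)).toReal

/-- The Laplacian. -/
def lap (d : ℕ) (f : Ed d → ℝ) : Ed d → ℝ :=
  fun x => ∑ i : Fin d, iteratedFDeriv ℝ 2 f x (fun _ => EuclideanSpace.single i (1:ℝ))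

/-- The divergence of a vector field. -/
def divg (d : ℕ) (V : Ed d → Ed d) : Ed d → ℝ :=
  fun x => ∑ i : Fin d, fderiv ℝ V x (EuclideanSpace.single i (1:ℝ)) i

/-- The `W^{m,q}(𝕋^d)` norm. -/
def sobN (d m : ℕ) (q : ℝ≥0∞) {F : Type*} [NormedAddCommGroup F] [NormedSpace ℝ F]
    (f : Ed d → F) : ℝ :=
  ∑ k ∈ Finset.range (m + 1), lpN d q (fun x => iteratedFDeriv ℝ k f x)

/-- The Euclidean distance on the flat torus `𝕋^d = ℝ^d/ℤ^d`. -/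
def torusDist (d : ℕ) (x y : Ed d) : ℝ := ⨅ k : Fin d → ℤ, ‖x - y - intVec d k‖

/-! ### Auxiliary lemmas -/

section Aux

lemma cube_measurable (d : ℕ) : MeasurableSet (cube d) := by
  have : cube d = ⋂ i, (fun x : Ed d => x i) ⁻¹' Set.Ico (0:ℝ) 1 := by
    ext x; simp [cube, Set.mem_iInter]
  rw [this]
  exact MeasurableSet.iInter fun i =>
    ((EuclideanSpace.proj i).continuous.measurable (α := Ed d)) measurableSet_Ico

lemma volume_cube (d : ℕ) : (volume : Measure (Ed d)) (cube d) = 1 := by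
  have h := EuclideanSpace.volume_preserving_symm_measurableEquiv_toLp (Fin d)
  have hpre : (MeasurableEquiv.toLp 2 (Fin d → ℝ)).symm ⁻¹'
      (Set.pi Set.univ fun _ => Set.Ico (0:ℝ) 1) = cube d := by
    ext x; simp [cube, Set.mem_pi]
  rw [← hpre, h.measure_preimage]
  · rw [volume_pi_pi]; simp
  · exact (MeasurableSet.univ_pi fun _ => measurableSet_Ico).nullMeasurableSet

lemma norm_le_sqrt {d : ℕ} {x : Ed d} (h : ∀ i, |x i| ≤ 1) : ‖x‖ ≤ Real.sqrt d := by
  rw [EuclideanSpace.norm_eq]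
  apply Real.sqrt_le_sqrt
  calc ∑ i, ‖x i‖ ^ 2 ≤ ∑ _i : Fin d, (1:ℝ) := by
        apply Finset.sum_le_sum
        intro i _
        have := h i
        rw [Real.norm_eq_abs]
        nlinarith [abs_nonneg (x i)]
    _ = d := by simp

lemma cube_subset_ball (d : ℕ) : cube d ⊆ Metric.closedBall 0 (Real.sqrt d) := by
  intro x hx
  simp only [Metric.mem_closedBall, dist_zero_right]
  exact norm_le_sqrt fun i => by
    have := hx i; rw [abs_le]; constructor <;> [linarith [(this).1]; linarith [le_of_lt this.2]]

lemma norm_sub_le_sqrt {d : ℕ} {x y : Ed d} (hx : x ∈ cube d) (hy : y ∈ cube d) :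
    ‖x - y‖ ≤ Real.sqrt d := by
  apply norm_le_sqrt
  intro i
  have h1 := hx i; have h2 := hy i
  have : (x - y) i = x i - y i := rfl
  rw [this, abs_le]
  constructor <;> [linarith [h1.1, le_of_lt h2.2]; linarith [le_of_lt h1.2, h2.1]]

lemma integrableOn_cube {d : ℕ} {H : Ed d → ℝ} (hH : Continuous H) :
    IntegrableOn H (cube d) volume :=
  (hH.continuousOn.integrableOn_compact
    (isCompact_closedBall (0 : Ed d) (Real.sqrt d))).mono_set (cube_subset_ball d)

end Aux

/-! ### The subcube decomposition -/

section Decomp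
variable {d lam : ℕ} (hlam : 0 < lam)

/-- A nonnegative integer vector viewed as a point of `ℝ^d`. -/
def natVec (d lam : ℕ) (k : Fin d → Fin lam) : Ed d := WithLp.toLp 2 (fun i => ((k i : ℕ) : ℝ))

/-- The affine contraction mapping the unit cube onto the subcube indexed by `k`. -/
def phiMap (d lam : ℕ) (k : Fin d → Fin lam) : Ed d → Ed d :=
  fun y => ((lam : ℝ))⁻¹ • (y + natVec d lam k)

lemma phiMap_apply (k : Fin d → Fin lam) (y : Ed d) (i : Fin d) :
    phiMap d lam k y i = ((lam:ℝ))⁻¹ * (y i + ((k i : ℕ) : ℝ)) := by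
  simp [phiMap, natVec, mul_add]

lemma smul_phiMap (k : Fin d → Fin lam) (hlam : 0 < lam) (y : Ed d) :
    (lam : ℝ) • phiMap d lam k y = y + natVec d lam k := by
  have hl : (lam:ℝ) ≠ 0 := Nat.cast_ne_zero.mpr hlam.ne'
  rw [phiMap, smul_smul, mul_inv_cancel₀ hl, one_smul]

include hlam

lemma mem_phiMap_image {k : Fin d → Fin lam} {x : Ed d} :
    x ∈ phiMap d lam k '' cube d ↔ ∀ i, (lam:ℝ) * x i - ((k i : ℕ) : ℝ) ∈ Set.Ico (0:ℝ) 1 := by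
  have hl : (lam:ℝ) ≠ 0 := Nat.cast_ne_zero.mpr hlam.ne'
  constructor
  · rintro ⟨y, hy, rfl⟩ i
    have := hy i
    rw [phiMap_apply, mul_inv_cancel_left₀ hl]
    simpa using this
  · intro h
    refine ⟨WithLp.toLp 2 (fun i => (lam:ℝ) * x i - ((k i : ℕ) : ℝ) : Fin d → ℝ), h, ?_⟩
    ext i
    rw [phiMap_apply]
    show ((lam:ℝ))⁻¹ * (((lam:ℝ) * x i - ((k i:ℕ):ℝ)) + ((k i : ℕ) : ℝ)) = x i
    field_simp
    ring

lemma cube_eq_iUnion : cube d = ⋃ k : Fin d → Fin lam, phiMap d lam k '' cube d := by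
  have hl : (0:ℝ) < lam := Nat.cast_pos.mpr hlam
  ext x
  simp only [Set.mem_iUnion]
  constructor
  · intro hx
    have hnn : ∀ i, (0:ℝ) ≤ (lam:ℝ) * x i := fun i => by nlinarith [(hx i).1]
    have hlt : ∀ i, (lam:ℝ) * x i < lam := fun i => by nlinarith [(hx i).2]
    have hfl : ∀ i, ⌊(lam:ℝ) * x i⌋.toNat < lam := by
      intro i
      have h1 : ⌊(lam:ℝ) * x i⌋ < (lam:ℤ) := by
        rw [Int.floor_lt]; exact_mod_cast hlt i
      omega
    refine ⟨fun i => ⟨⌊(lam:ℝ) * x i⌋.toNat, hfl i⟩, ?_⟩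
    rw [mem_phiMap_image hlam]
    intro i
    have h0 : (0:ℤ) ≤ ⌊(lam:ℝ) * x i⌋ := Int.floor_nonneg.mpr (hnn i)
    have hc : ((⌊(lam:ℝ) * x i⌋.toNat : ℕ) : ℝ) = ((⌊(lam:ℝ) * x i⌋ : ℤ) : ℝ) := by
      exact_mod_cast congrArg (Int.cast : ℤ → ℝ) (Int.toNat_of_nonneg h0)
    show (lam:ℝ) * x i - ((⌊(lam:ℝ) * x i⌋.toNat : ℕ) : ℝ) ∈ Set.Ico (0:ℝ) 1
    rw [hc]
    exact ⟨by linarith [Int.floor_le ((lam:ℝ) * x i)],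
           by linarith [Int.lt_floor_add_one ((lam:ℝ) * x i)]⟩
  · rintro ⟨k, hk⟩
    rw [mem_phiMap_image hlam] at hk
    intro i
    have h := hk i
    have hki1 : ((k i : ℕ) : ℝ) + 1 ≤ lam := by exact_mod_cast (k i).2
    have hki0 : (0:ℝ) ≤ ((k i : ℕ) : ℝ) := Nat.cast_nonneg _
    exact ⟨by nlinarith [h.1], by nlinarith [h.2]⟩

lemma phiMap_disjoint : Pairwise (Function.onFun Disjoint
    fun k : Fin d → Fin lam => phiMap d lam k '' cube d) := by
  intro k k' hne
  rw [Function.onFun, Set.disjoint_left]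
  intro x hx hx'
  rw [mem_phiMap_image hlam] at hx hx'
  apply hne
  funext i
  have h1 := hx i; have h2 := hx' i
  have habs : |((k i : ℕ) : ℝ) - ((k' i : ℕ) : ℝ)| < 1 := by
    rw [abs_lt]; constructor <;> [linarith [h1.2, h2.1]; linarith [h1.1, h2.2]]
  have hnat : (k i : ℕ) = (k' i : ℕ) := by
    rw [abs_lt] at habs
    have h3 : ((k i : ℕ) : ℝ) - ((k' i : ℕ) : ℝ) < 1 := habs.2
    have h4 : (-1:ℝ) < ((k i : ℕ) : ℝ) - ((k' i : ℕ) : ℝ) := habs.1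
    have h3' : ((k i : ℕ) : ℝ) < ((k' i : ℕ) : ℝ) + 1 := by linarith
    have h4' : ((k' i : ℕ) : ℝ) < ((k i : ℕ) : ℝ) + 1 := by linarith
    have h5 : (k i : ℕ) < (k' i : ℕ) + 1 := by exact_mod_cast h3'
    have h6 : (k' i : ℕ) < (k i : ℕ) + 1 := by exact_mod_cast h4'
    omega
  exact Fin.ext hnat

lemma phiMap_image_measurable (k : Fin d → Fin lam) :
    MeasurableSet (phiMap d lam k '' cube d) := by
  have : phiMap d lam k '' cube d =
      ⋂ i, (fun x : Ed d => (lam:ℝ) * x i - ((k i : ℕ) : ℝ)) ⁻¹' Set.Ico (0:ℝ) 1 := by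
    ext x
    rw [mem_phiMap_image hlam]
    simp [Set.mem_iInter]
  rw [this]
  exact MeasurableSet.iInter fun i =>
    (((continuous_const.mul ((EuclideanSpace.proj (𝕜 := ℝ) i).continuous)).sub
      continuous_const).measurable (f := fun x : Ed d => (lam:ℝ) * x i - ((k i : ℕ) : ℝ))) measurableSet_Ico

lemma setIntegral_phiMap_image (k : Fin d → Fin lam) (H : Ed d → ℝ) :
    ∫ x in phiMap d lam k '' cube d, H x =
      (((lam:ℝ))^d)⁻¹ * ∫ y in cube d, H (phiMap d lam k y) := by
  have hl : (lam:ℝ) ≠ 0 := Nat.cast_ne_zero.mpr hlam.ne'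
  set c : ℝ := ((lam:ℝ))⁻¹ with hc
  set A : Ed d →L[ℝ] Ed d := c • ContinuousLinearMap.id ℝ (Ed d) with hA
  have hderiv : ∀ y ∈ cube d, HasFDerivWithinAt (phiMap d lam k) A (cube d) y := by
    intro y _
    have h1 : HasFDerivAt (fun y : Ed d => c • (y + natVec d lam k)) A y := by
      exact (((hasFDerivAt_id (𝕜 := ℝ) y).add_const (natVec d lam k)).const_smul c)
    exact h1.hasFDerivWithinAt
  have hinj : Set.InjOn (phiMap d lam k) (cube d) := by
    intro a _ b _ hab
    have h : c • (a + natVec d lam k) = c • (b + natVec d lam k) := hab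
    have hc0 : c ≠ 0 := inv_ne_zero hl
    have := smul_right_injective (Ed d) hc0 h
    exact add_right_cancel this
  have hdet : A.det = c ^ d := by
    rw [ContinuousLinearMap.det]
    have : (A : Ed d →ₗ[ℝ] Ed d) = c • (LinearMap.id : Ed d →ₗ[ℝ] Ed d) := by
      ext x; rfl
    rw [this, LinearMap.det_smul, finrank_euclideanSpace_fin, LinearMap.det_id, mul_one]
  rw [integral_image_eq_integral_abs_det_fderiv_smul volume (cube_measurable d) hderiv hinj H]
  have : ∀ y, |A.det| • H (phiMap d lam k y) = (((lam:ℝ))^d)⁻¹ * H (phiMap d lam k y) := by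
    intro y
    rw [hdet, abs_of_nonneg (by positivity), smul_eq_mul, hc, inv_pow]
  simp_rw [this]
  rw [MeasureTheory.integral_const_mul]

/-- Decomposition of an integral over the unit cube into integrals over subcubes. -/
lemma decomp {H : Ed d → ℝ} (hH : Continuous H) :
    ∫ x in cube d, H x
      = ∑ k : Fin d → Fin lam, (((lam:ℝ))^d)⁻¹ * ∫ y in cube d, H (phiMap d lam k y) := by
  have hsub : ∀ k : Fin d → Fin lam, phiMap d lam k '' cube d ⊆ cube d := by
    intro k
    conv_rhs => rw [cube_eq_iUnion hlam]
    exact Set.subset_iUnion (fun k : Fin d → Fin lam => phiMap d lam k '' cube d) k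
  conv_lhs => rw [cube_eq_iUnion hlam]
  rw [integral_iUnion_fintype (fun k => phiMap_image_measurable hlam k) (phiMap_disjoint hlam)
    (fun k => (integrableOn_cube hH).mono_set (hsub k))]
  exact Finset.sum_congr rfl fun k _ => setIntegral_phiMap_image hlam k H

end Decomp

/-! ### Periodicity and boundedness -/

section Periodic
variable {d : ℕ} {F : Type*} [NormedAddCommGroup F]

lemma exists_shift_mem_cube (x : Ed d) : ∃ k : Fin d → ℤ, x + intVec d k ∈ cube d := by
  refine ⟨fun i => -⌊x i⌋, fun i => ?_⟩
  have : (x + intVec d (fun i => -⌊x i⌋)) i = x i - ⌊x i⌋ := by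
    simp only [intVec, PiLp.add_apply, PiLp.toLp_apply]
    push_cast; ring
  rw [this]
  exact ⟨by linarith [Int.floor_le (x i)], by linarith [Int.lt_floor_add_one (x i)]⟩

lemma norm_le_ciSup {f : Ed d → F} (hf : Continuous f) (hper : PeriodicZd d f) (x : Ed d) :
    ‖f x‖ ≤ ⨆ y, ‖f y‖ := by
  have hK : IsCompact (Metric.closedBall (0 : Ed d) (Real.sqrt d)) :=
    isCompact_closedBall _ _
  have himg : IsCompact ((fun y => ‖f y‖) '' Metric.closedBall (0 : Ed d) (Real.sqrt d)) :=
    hK.image (hf.norm)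
  have hbdd : BddAbove (Set.range fun y => ‖f y‖) := by
    apply BddAbove.mono _ himg.bddAbove
    rintro - ⟨y, rfl⟩
    obtain ⟨k, hk⟩ := exists_shift_mem_cube y
    exact ⟨y + intVec d k, cube_subset_ball d hk, by simp only [hper y k]⟩
  exact le_ciSup hbdd x

lemma ciSup_norm_nonneg (f : Ed d → F) : 0 ≤ ⨆ y : Ed d, ‖f y‖ := by
  rcases isEmpty_or_nonempty (Ed d) with h | h
  · rw [Real.iSup_of_isEmpty]
  · by_cases hb : BddAbove (Set.range fun y => ‖f y‖)
    · exact le_trans (norm_nonneg _) (le_ciSup hb h.some)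
    · rw [Real.iSup_of_not_bddAbove hb]

lemma fderiv_periodic {f : Ed d → ℝ} (hf : Differentiable ℝ f) (hper : PeriodicZd d f) :
    PeriodicZd d (fun x => fderiv ℝ f x) := by
  intro x k
  have h1 : HasFDerivAt f (fderiv ℝ f (x + intVec d k)) (x + intVec d k) :=
    (hf _).hasFDerivAt
  have h2 : HasFDerivAt (fun y => f (y + intVec d k))
      ((fderiv ℝ f (x + intVec d k)).comp (ContinuousLinearMap.id ℝ (Ed d))) x :=
    h1.comp x ((hasFDerivAt_id x).add_const (intVec d k))
  have h3 : (fun y : Ed d => f (y + intVec d k)) = f := funext fun y => hper y k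
  rw [h3, ContinuousLinearMap.comp_id] at h2
  show fderiv ℝ f (x + intVec d k) = fderiv ℝ f x
  rw [← h2.fderiv]

end Periodic

/-! ### Elementary `rpow` inequalities -/

section Rpow

lemma real_add_rpow_le {x y p : ℝ} (hx : 0 ≤ x) (hy : 0 ≤ y) (hp : 1 ≤ p) :
    x ^ p + y ^ p ≤ (x + y) ^ p := by
  have h := NNReal.add_rpow_le_rpow_add x.toNNReal y.toNNReal hp
  have := NNReal.coe_le_coe.mpr h
  push_cast [NNReal.coe_rpow, Real.coe_toNNReal x hx, Real.coe_toNNReal y hy] at this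
  simpa [Real.coe_toNNReal x hx, Real.coe_toNNReal y hy] using this

lemma rpow_sub_rpow_le {p M a b : ℝ} (hp : 1 ≤ p) (h0b : 0 ≤ b) (hba : b ≤ a) (haM : a ≤ M) :
    a ^ p - b ^ p ≤ p * M ^ (p - 1) * (a - b) := by
  have h0a : 0 ≤ a := h0b.trans hba
  rcases eq_or_lt_of_le h0a with h | h
  · have ha : a = 0 := h.symm
    have hb : b = 0 := le_antisymm (ha ▸ hba) h0b
    simp [ha, hb, Real.zero_rpow (by linarith : p ≠ 0)]
  · set t : ℝ := b / a with ht
    have ht0 : 0 ≤ t := div_nonneg h0b h.le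
    have ht1 : t ≤ 1 := div_le_one_of_le₀ hba h.le
    have hbern : 1 + p * (t - 1) ≤ t ^ p := by
      have := one_add_mul_self_le_rpow_one_add (by linarith : (-1:ℝ) ≤ t - 1) hp
      simpa using this
    have hb_eq : b = a * t := by rw [ht]; field_simp
    have hbp : b ^ p = a ^ p * t ^ p := by
      rw [hb_eq, Real.mul_rpow h.le ht0]
    have key : a ^ p - b ^ p ≤ a ^ p * (p * (1 - t)) := by
      rw [hbp]; nlinarith [Real.rpow_nonneg h.le p]
    have hap : a ^ p = a ^ (p - 1) * a := by
      rw [← Real.rpow_add_one h.ne' (p-1)]; ring_nf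
    have hM1 : a ^ (p - 1) ≤ M ^ (p - 1) :=
      Real.rpow_le_rpow h.le haM (by linarith)
    calc a ^ p - b ^ p ≤ a ^ p * (p * (1 - t)) := key
      _ = p * a ^ (p-1) * (a - b) := by rw [hap, hb_eq]; ring
      _ ≤ p * M ^ (p-1) * (a - b) := by
          apply mul_le_mul_of_nonneg_right _ (by linarith)
          exact mul_le_mul_of_nonneg_left hM1 (by linarith)

lemma abs_rpow_sub_abs_rpow_le {p M L a b : ℝ} (hp : 1 ≤ p) (ha : |a| ≤ M) (hb : |b| ≤ M)
    (hab : |a - b| ≤ L) : |(|a|) ^ p - (|b|) ^ p| ≤ p * M ^ (p - 1) * L := by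
  have hM0 : 0 ≤ M := (abs_nonneg a).trans ha
  have hL0 : 0 ≤ L := (abs_nonneg _).trans hab
  have hcoef : 0 ≤ p * M ^ (p-1) := by positivity
  have key : ∀ u v : ℝ, |v| ≤ |u| → |u| ≤ M → |u - v| ≤ L →
      |u| ^ p - |v| ^ p ≤ p * M ^ (p-1) * L := by
    intro u v huv huM habL
    calc |u| ^ p - |v| ^ p ≤ p * M ^ (p-1) * (|u| - |v|) :=
          rpow_sub_rpow_le hp (abs_nonneg v) huv huM
      _ ≤ p * M ^ (p-1) * L := by
          apply mul_le_mul_of_nonneg_left _ hcoef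
          linarith [abs_sub_abs_le_abs_sub u v, habL]
  rcases le_total (|b|) (|a|) with h | h
  · have hnn : 0 ≤ (|a|) ^ p - (|b|) ^ p := by
      have := Real.rpow_le_rpow (abs_nonneg b) h (by linarith : (0:ℝ) ≤ p); linarith
    rw [abs_of_nonneg hnn]
    exact key a b h ha hab
  · have hnn : (|a|) ^ p - (|b|) ^ p ≤ 0 := by
      have := Real.rpow_le_rpow (abs_nonneg a) h (by linarith : (0:ℝ) ≤ p); linarith
    rw [abs_of_nonpos hnn, neg_sub]
    exact key b a h hb (by rwa [abs_sub_comm] at hab)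

lemma abs_sub_le_rpow_of_abs_rpow_sub {A B E p : ℝ} (hA : 0 ≤ A) (hB : 0 ≤ B) (hp : 1 ≤ p)
    (h : |A ^ p - B ^ p| ≤ E) : |A - B| ≤ E ^ (1/p) := by
  have hp0 : (0:ℝ) < p := by linarith
  have key : ∀ X Y : ℝ, 0 ≤ Y → Y ≤ X → |X ^ p - Y ^ p| ≤ E → X - Y ≤ E ^ (1/p) := by
    intro X Y hY hYX habs
    have h1 : (X - Y) ^ p + Y ^ p ≤ X ^ p := by
      have := real_add_rpow_le (by linarith : (0:ℝ) ≤ X - Y) hY hp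
      simpa using this
    have h2 : X ^ p - Y ^ p ≤ E := by
      have : Y ^ p ≤ X ^ p := Real.rpow_le_rpow hY hYX hp0.le
      rw [abs_of_nonneg (by linarith)] at habs; exact habs
    have h3 : (X - Y) ^ p ≤ E := by linarith
    calc X - Y = ((X - Y) ^ p) ^ (1/p) := by
          rw [← Real.rpow_mul (by linarith : (0:ℝ) ≤ X - Y), mul_one_div_cancel hp0.ne',
            Real.rpow_one]
      _ ≤ E ^ (1/p) := Real.rpow_le_rpow (Real.rpow_nonneg (by linarith) p) h3 (by positivity)
  rcases le_total B A with hle | hle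
  · rw [abs_of_nonneg (by linarith)]; exact key A B hB hle h
  · rw [abs_of_nonpos (by linarith), neg_sub]
    exact key B A hA hle (by rwa [abs_sub_comm] at h)

lemma rpow_geom_mean_le {p M L : ℝ} (hp : 1 ≤ p) (hM : 0 ≤ M) (hL : 0 ≤ L) :
    (M ^ (p-1) * L) ^ (1/p) ≤ M + L := by
  have hp0 : (0:ℝ) < p := by linarith
  rcases eq_or_lt_of_le hL with h | h
  · rw [← h, mul_zero, Real.zero_rpow (by positivity : 1/p ≠ 0)]
    linarith
  · have hML : 0 < M + L := by linarith
    have h1 : M ^ (p-1) ≤ (M + L) ^ (p-1) :=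
      Real.rpow_le_rpow hM (by linarith) (by linarith)
    have h2 : M ^ (p-1) * L ≤ (M + L) ^ (p-1) * (M + L) := by
      apply mul_le_mul h1 (by linarith) hL (by positivity)
    have h3 : (M + L) ^ (p-1) * (M + L) = (M + L) ^ p := by
      rw [← Real.rpow_add_one hML.ne' (p-1)]; ring_nf
    calc (M ^ (p-1) * L) ^ (1/p) ≤ ((M + L) ^ p) ^ (1/p) := by
          apply Real.rpow_le_rpow (by positivity) _ (by positivity)
          rw [← h3]; exact h2
      _ = M + L := by
          rw [← Real.rpow_mul hML.le, mul_one_div_cancel hp0.ne', Real.rpow_one]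

end Rpow

/-! ### The `L^p` norm as an integral -/

lemma lpN_rpow {d : ℕ} {p : ℝ} (hp : 1 ≤ p) {h : Ed d → ℝ} (hc : Continuous h) :
    lpN d (ENNReal.ofReal p) h ^ p = ∫ x in cube d, |h x| ^ p := by
  have hp0 : (0:ℝ) < p := by linarith
  have hq0 : ENNReal.ofReal p ≠ 0 := by
    simp [ENNReal.ofReal_eq_zero]; linarith
  have hqt : ENNReal.ofReal p ≠ ∞ := ENNReal.ofReal_ne_top
  have hcv : cubeVol d = volume.restrict (cube d) := rfl
  rw [lpN, eLpNorm_eq_lintegral_rpow_enorm_toReal hq0 hqt, ENNReal.toReal_ofReal hp0.le]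
  set L : ℝ≥0∞ := ∫⁻ x, ‖h x‖ₑ ^ p ∂(cubeVol d) with hL
  have step1 : ((L ^ (1/p)).toReal) ^ p = L.toReal := by
    rw [ENNReal.toReal_rpow, ← ENNReal.rpow_mul, one_div_mul_cancel hp0.ne', ENNReal.rpow_one]
  rw [step1]
  have step2 : ∫ x in cube d, |h x| ^ p
      = (∫⁻ x, ENNReal.ofReal (|h x| ^ p) ∂(volume.restrict (cube d))).toReal := by
    rw [integral_eq_lintegral_of_nonneg_ae]
    · exact Filter.Eventually.of_forall fun x => by positivity
    · exact (hc.abs.rpow_const fun x => Or.inr hp0.le).aestronglyMeasurable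
  rw [step2, hL, hcv]
  congr 1
  apply lintegral_congr
  intro x
  rw [← ENNReal.ofReal_rpow_of_nonneg (abs_nonneg _) hp0.le]
  congr 1
  rw [← ofReal_norm, Real.norm_eq_abs]

/-! ### The key oscillation estimate -/

lemma key_estimate {d : ℕ} {p : ℝ} (hp : 1 ≤ p) {f g : Ed d → ℝ}
    (hf : ContDiff ℝ (⊤ : ℕ∞) f) (hfper : PeriodicZd d f)
    (hg : Continuous g) (hgper : PeriodicZd d g)
    {lam : ℕ} (hlam : 0 < lam) :
    |(∫ x in cube d, (|f x|) ^ p * (|g ((lam:ℝ) • x)|) ^ p)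
        - (∫ x in cube d, (|f x|) ^ p) * ∫ x in cube d, (|g x|) ^ p|
      ≤ ((p * Real.sqrt d / lam) * (((⨆ x, ‖f x‖) : ℝ) ^ (p-1) * (⨆ x, ‖fderiv ℝ f x‖)))
          * ∫ x in cube d, (|g x|) ^ p := by
  have hp0 : (0:ℝ) < p := by linarith
  have hlamR : (0:ℝ) < lam := Nat.cast_pos.mpr hlam
  haveI hfinm : IsFiniteMeasure ((volume : Measure (Ed d)).restrict (cube d)) :=
    ⟨by rw [Measure.restrict_apply_univ, volume_cube]; exact ENNReal.one_lt_top⟩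
  set M : ℝ := ⨆ x, ‖f x‖ with hM
  set L : ℝ := ⨆ x, ‖fderiv ℝ f x‖ with hLdef
  have hM0 : 0 ≤ M := ciSup_norm_nonneg f
  have hL0 : 0 ≤ L := ciSup_norm_nonneg fun x => fderiv ℝ f x
  have hfc : Continuous f := hf.continuous
  have hfM : ∀ x, |f x| ≤ M := fun x => by
    have := norm_le_ciSup hfc hfper x; rwa [Real.norm_eq_abs] at this
  have hfdiff : Differentiable ℝ f := hf.differentiable (by simp)
  have hfdc : Continuous fun x => fderiv ℝ f x := hf.continuous_fderiv (by simp)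
  have hfdper : PeriodicZd d fun x => fderiv ℝ f x := fderiv_periodic hfdiff hfper
  have hfL : ∀ x y : Ed d, |f x - f y| ≤ L * ‖x - y‖ := by
    intro x y
    have := convex_univ.norm_image_sub_le_of_norm_fderiv_le
      (f := f) (C := L) (fun z _ => hfdiff z)
      (fun z _ => norm_le_ciSup hfdc hfdper z) (Set.mem_univ y) (Set.mem_univ x)
    simpa [Real.norm_eq_abs] using this
  set F : Ed d → ℝ := fun x => (|f x|) ^ p with hF
  set Gp : Ed d → ℝ := fun x => (|g x|) ^ p with hGp
  have hFc : Continuous F := hfc.abs.rpow_const fun x => Or.inr hp0.le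
  have hGpc : Continuous Gp := hg.abs.rpow_const fun x => Or.inr hp0.le
  have hGp0 : ∀ x, 0 ≤ Gp x := fun x => by positivity
  set eps : ℝ := p * M ^ (p-1) * (L * (Real.sqrt d / lam)) with heps
  have heps0 : 0 ≤ eps := by positivity
  have hosc : ∀ x y : Ed d, |F x - F y| ≤ p * M ^ (p-1) * (L * ‖x - y‖) := fun x y =>
    abs_rpow_sub_abs_rpow_le hp (hfM x) (hfM y) (hfL x y)
  have hprod : Continuous fun x : Ed d => F x * Gp ((lam:ℝ) • x) :=
    hFc.mul (hGpc.comp (continuous_const_smul (lam:ℝ) : Continuous fun x : Ed d => (lam:ℝ) • x))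
  have hdecFG := decomp hlam hprod
  have hdecF := decomp hlam hFc
  have hGshift : ∀ (k : Fin d → Fin lam) (y : Ed d),
      Gp ((lam:ℝ) • phiMap d lam k y) = Gp y := by
    intro k y
    rw [smul_phiMap k hlam y]
    have hv : natVec d lam k = intVec d fun i => ((k i : ℕ) : ℤ) := by
      ext i; show ((k i : ℕ) : ℝ) = (((k i : ℕ) : ℤ) : ℝ); push_cast; ring
    rw [hGp]
    simp only [hv, hgper y fun i => ((k i : ℕ) : ℤ)]
  have hdecFG' : ∫ x in cube d, F x * Gp ((lam:ℝ) • x)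
      = ∑ k : Fin d → Fin lam, (((lam:ℝ))^d)⁻¹ *
          ∫ y in cube d, F (phiMap d lam k y) * Gp y := by
    rw [hdecFG]
    exact Finset.sum_congr rfl fun k _ => by
      congr 1
      exact setIntegral_congr_fun (cube_measurable d) fun y _ => by rw [hGshift k y]
  have hphic : ∀ k : Fin d → Fin lam, Continuous (phiMap d lam k) := fun k =>
    (continuous_const_smul _).comp (continuous_id.add continuous_const)
  have hIGp : IntegrableOn Gp (cube d) volume := integrableOn_cube hGpc
  have hIF : ∀ k : Fin d → Fin lam, IntegrableOn (fun y => F (phiMap d lam k y)) (cube d) volume :=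
    fun k => integrableOn_cube (hFc.comp (hphic k))
  have hIFG : ∀ k : Fin d → Fin lam,
      IntegrableOn (fun y => F (phiMap d lam k y) * Gp y) (cube d) volume :=
    fun k => integrableOn_cube ((hFc.comp (hphic k)).mul hGpc)
  have hdist : ∀ (k : Fin d → Fin lam), ∀ x ∈ cube d, ∀ y ∈ cube d,
      ‖phiMap d lam k y - phiMap d lam k x‖ ≤ Real.sqrt d / lam := by
    intro k x hx y hy
    have hsub : phiMap d lam k y - phiMap d lam k x = ((lam:ℝ))⁻¹ • (y - x) := by
      rw [phiMap, phiMap, ← smul_sub]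
      congr 1
      abel
    rw [hsub, norm_smul, Real.norm_eq_abs, abs_of_nonneg (by positivity), div_eq_inv_mul]
    exact mul_le_mul_of_nonneg_left (norm_sub_le_sqrt hy hx) (by positivity)
  set c : (Fin d → Fin lam) → ℝ := fun k => ∫ x in cube d, F (phiMap d lam k x) with hcdef
  have hoscmean : ∀ (k : Fin d → Fin lam), ∀ y ∈ cube d, |F (phiMap d lam k y) - c k| ≤ eps := by
    intro k y hy
    have hconst : F (phiMap d lam k y) = ∫ _x in cube d, F (phiMap d lam k y) := by
      rw [setIntegral_const, measureReal_def, volume_cube, ENNReal.toReal_one, one_smul]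
    rw [hconst, hcdef, ← integral_sub (integrable_const _) (hIF k)]
    have hbound : ∀ x ∈ cube d, |F (phiMap d lam k y) - F (phiMap d lam k x)| ≤ eps := by
      intro x hx
      have hd := hdist k x hx y hy
      calc |F (phiMap d lam k y) - F (phiMap d lam k x)|
          ≤ p * M ^ (p-1) * (L * ‖phiMap d lam k y - phiMap d lam k x‖) := hosc _ _
        _ ≤ eps := by
            rw [heps]
            apply mul_le_mul_of_nonneg_left _ (by positivity)
            exact mul_le_mul_of_nonneg_left hd (by positivity)
    have habs : |∫ x in cube d, (F (phiMap d lam k y) - F (phiMap d lam k x))|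
        ≤ ∫ x in cube d, |F (phiMap d lam k y) - F (phiMap d lam k x)| := by
      simpa only [Real.norm_eq_abs] using norm_integral_le_integral_norm
        (μ := (volume : Measure (Ed d)).restrict (cube d))
        (fun x => F (phiMap d lam k y) - F (phiMap d lam k x))
    refine habs.trans ?_
    have hIabs : IntegrableOn (fun x => |F (phiMap d lam k y) - F (phiMap d lam k x)|)
        (cube d) volume := ((integrable_const _).sub (hIF k)).abs
    calc ∫ x in cube d, |F (phiMap d lam k y) - F (phiMap d lam k x)|
        ≤ ∫ _x in cube d, eps :=
          setIntegral_mono_on hIabs (integrable_const _) (cube_measurable d) hbound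
      _ = eps := by rw [setIntegral_const, measureReal_def, volume_cube, ENNReal.toReal_one, one_smul]
  have hterm : ∀ k : Fin d → Fin lam,
      |(∫ y in cube d, F (phiMap d lam k y) * Gp y) - c k * ∫ y in cube d, Gp y|
        ≤ eps * ∫ y in cube d, Gp y := by
    intro k
    have hrw : (∫ y in cube d, F (phiMap d lam k y) * Gp y) - c k * ∫ y in cube d, Gp y
        = ∫ y in cube d, (F (phiMap d lam k y) - c k) * Gp y := by
      rw [← MeasureTheory.integral_const_mul, ← integral_sub (hIFG k) (hIGp.const_mul (c k))]
      congr 1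
      funext y
      ring
    rw [hrw]
    have habs : |∫ y in cube d, (F (phiMap d lam k y) - c k) * Gp y|
        ≤ ∫ y in cube d, |(F (phiMap d lam k y) - c k) * Gp y| := by
      simpa only [Real.norm_eq_abs] using norm_integral_le_integral_norm
        (μ := (volume : Measure (Ed d)).restrict (cube d))
        (fun y => (F (phiMap d lam k y) - c k) * Gp y)
    refine habs.trans ?_
    have hIabs : IntegrableOn (fun y => |(F (phiMap d lam k y) - c k) * Gp y|) (cube d) volume :=
      (integrableOn_cube (((hFc.comp (hphic k)).sub continuous_const).mul hGpc)).abs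
    calc ∫ y in cube d, |(F (phiMap d lam k y) - c k) * Gp y|
        ≤ ∫ y in cube d, eps * Gp y := by
          apply setIntegral_mono_on hIabs (hIGp.const_mul eps) (cube_measurable d)
          intro y hy
          rw [abs_mul, abs_of_nonneg (hGp0 y)]
          exact mul_le_mul_of_nonneg_right (hoscmean k y hy) (hGp0 y)
      _ = eps * ∫ y in cube d, Gp y := MeasureTheory.integral_const_mul _ _
  -- assemble
  have hGpint0 : 0 ≤ ∫ y in cube d, Gp y := integral_nonneg hGp0
  have hsplit : (∫ x in cube d, F x * Gp ((lam:ℝ) • x))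
      - (∫ x in cube d, F x) * ∫ x in cube d, Gp x
      = ∑ k : Fin d → Fin lam, (((lam:ℝ))^d)⁻¹ *
          ((∫ y in cube d, F (phiMap d lam k y) * Gp y) - c k * ∫ y in cube d, Gp y) := by
    rw [hdecFG', hdecF, Finset.sum_mul, ← Finset.sum_sub_distrib]
    exact Finset.sum_congr rfl fun k _ => by rw [hcdef]; ring
  rw [show (∫ x in cube d, (|f x|) ^ p * (|g ((lam:ℝ) • x)|) ^ p)
        - (∫ x in cube d, (|f x|) ^ p) * ∫ x in cube d, (|g x|) ^ p
      = (∫ x in cube d, F x * Gp ((lam:ℝ) • x))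
        - (∫ x in cube d, F x) * ∫ x in cube d, Gp x from rfl, hsplit]
  have hcard : (Fintype.card (Fin d → Fin lam) : ℝ) = (lam:ℝ) ^ d := by
    rw [Fintype.card_fun]
    push_cast
    simp
  calc |∑ k : Fin d → Fin lam, (((lam:ℝ))^d)⁻¹ *
          ((∫ y in cube d, F (phiMap d lam k y) * Gp y) - c k * ∫ y in cube d, Gp y)|
      ≤ ∑ k : Fin d → Fin lam, |(((lam:ℝ))^d)⁻¹ *
          ((∫ y in cube d, F (phiMap d lam k y) * Gp y) - c k * ∫ y in cube d, Gp y)| :=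
        Finset.abs_sum_le_sum_abs _ _
    _ ≤ ∑ _k : Fin d → Fin lam, (((lam:ℝ))^d)⁻¹ * (eps * ∫ y in cube d, Gp y) := by
        apply Finset.sum_le_sum
        intro k _
        rw [abs_mul, abs_of_nonneg (by positivity : (0:ℝ) ≤ (((lam:ℝ))^d)⁻¹)]
        exact mul_le_mul_of_nonneg_left (hterm k) (by positivity)
    _ = (Fintype.card (Fin d → Fin lam) : ℝ) * ((((lam:ℝ))^d)⁻¹ * (eps * ∫ y in cube d, Gp y)) := by
        rw [Finset.sum_const, Finset.card_univ, nsmul_eq_mul]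
    _ = eps * ∫ y in cube d, Gp y := by
        rw [hcard]
        field_simp
    _ ≤ ((p * Real.sqrt d / lam) * (M ^ (p-1) * L)) * ∫ x in cube d, (|g x|) ^ p := by
        apply mul_le_mul_of_nonneg_right _ hGpint0
        rw [heps]
        apply le_of_eq
        ring

/-- **Improved Hölder inequality for fast oscillations.** -/
theorem improved_holder (d : ℕ) (p : ℝ) (hp : 1 ≤ p) :
    ∃ C : ℝ, ∀ f g : Ed d → ℝ,
      ContDiff ℝ (⊤ : ℕ∞) f → PeriodicZd d f →
      ContDiff ℝ (⊤ : ℕ∞) g → PeriodicZd d g →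
      ∀ lam : ℕ, 0 < lam →
        |lpN d (ENNReal.ofReal p) (fun x => f x * g ((lam : ℝ) • x))
            - lpN d (ENNReal.ofReal p) f * lpN d (ENNReal.ofReal p) g|
          ≤ C / (lam : ℝ) ^ (1 / p) *
              ((⨆ x, ‖f x‖) + ⨆ x, ‖fderiv ℝ f x‖) * lpN d (ENNReal.ofReal p) g := by
  refine ⟨(p * Real.sqrt d) ^ (1/p), ?_⟩
  intro f g hf hfper hg hgper lam hlam
  have hp0 : (0:ℝ) < p := by linarith
  have hlamR : (0:ℝ) < lam := Nat.cast_pos.mpr hlam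
  have hfc : Continuous f := hf.continuous
  have hgc : Continuous g := hg.continuous
  set M : ℝ := ⨆ x, ‖f x‖ with hM
  set L : ℝ := ⨆ x, ‖fderiv ℝ f x‖ with hLdef
  have hM0 : 0 ≤ M := ciSup_norm_nonneg f
  have hL0 : 0 ≤ L := ciSup_norm_nonneg fun x => fderiv ℝ f x
  set A : ℝ := lpN d (ENNReal.ofReal p) (fun x => f x * g ((lam : ℝ) • x)) with hA
  set B : ℝ := lpN d (ENNReal.ofReal p) f with hB
  set Cg : ℝ := lpN d (ENNReal.ofReal p) g with hCg
  have hA0 : 0 ≤ A := ENNReal.toReal_nonneg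
  have hB0 : 0 ≤ B := ENNReal.toReal_nonneg
  have hCg0 : 0 ≤ Cg := ENNReal.toReal_nonneg
  have hApow : A ^ p = ∫ x in cube d, (|f x|) ^ p * (|g ((lam:ℝ) • x)|) ^ p := by
    have hc : Continuous fun x : Ed d => f x * g ((lam:ℝ) • x) :=
      hfc.mul (hgc.comp (continuous_const_smul (lam:ℝ) : Continuous fun x : Ed d => (lam:ℝ) • x))
    rw [hA, lpN_rpow hp hc]
    apply setIntegral_congr_fun (cube_measurable d)
    intro x _
    show |f x * g ((lam:ℝ) • x)| ^ p = (|f x|) ^ p * (|g ((lam:ℝ) • x)|) ^ p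
    rw [abs_mul, Real.mul_rpow (abs_nonneg _) (abs_nonneg _)]
  have hBpow : B ^ p = ∫ x in cube d, (|f x|) ^ p := lpN_rpow hp hfc
  have hCgpow : Cg ^ p = ∫ x in cube d, (|g x|) ^ p := lpN_rpow hp hgc
  have hBCpow : (B * Cg) ^ p = (∫ x in cube d, (|f x|) ^ p) * ∫ x in cube d, (|g x|) ^ p := by
    rw [Real.mul_rpow hB0 hCg0, hBpow, hCgpow]
  have key := key_estimate hp hf hfper hgc hgper hlam
  rw [← hApow, ← hBCpow] at key
  have hGpint0 : 0 ≤ ∫ x in cube d, (|g x|) ^ p :=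
    integral_nonneg fun x => by positivity
  have habs := abs_sub_le_rpow_of_abs_rpow_sub hA0 (mul_nonneg hB0 hCg0) hp key
  refine habs.trans ?_
  -- massage the right-hand side
  have hCgid : (∫ x in cube d, (|g x|) ^ p) ^ (1/p) = Cg := by
    rw [← hCgpow, ← Real.rpow_mul hCg0, mul_one_div_cancel hp0.ne', Real.rpow_one]
  have hsplit : (((p * Real.sqrt d / lam) * (M ^ (p-1) * L)) * ∫ x in cube d, (|g x|) ^ p) ^ (1/p)
      = (p * Real.sqrt d / lam) ^ (1/p) * (M ^ (p-1) * L) ^ (1/p) * Cg := by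
    rw [Real.mul_rpow (by positivity) hGpint0, Real.mul_rpow (by positivity) (by positivity),
      hCgid]
  rw [hsplit]
  have h1 : (p * Real.sqrt d / lam) ^ (1/p)
      = (p * Real.sqrt d) ^ (1/p) / (lam:ℝ) ^ (1/p) :=
    Real.div_rpow (by positivity) hlamR.le _
  have h2 : (M ^ (p-1) * L) ^ (1/p) ≤ M + L := rpow_geom_mean_le hp hM0 hL0
  rw [h1]
  have h3 : (0:ℝ) ≤ (p * Real.sqrt d) ^ (1/p) / (lam:ℝ) ^ (1/p) := by positivity
  calc (p * Real.sqrt d) ^ (1/p) / (lam:ℝ) ^ (1/p) * (M ^ (p-1) * L) ^ (1/p) * Cg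
      ≤ (p * Real.sqrt d) ^ (1/p) / (lam:ℝ) ^ (1/p) * (M + L) * Cg := by
        apply mul_le_mul_of_nonneg_right _ hCg0
        exact mul_le_mul_of_nonneg_left h2 h3
    _ = (p * Real.sqrt d) ^ (1/p) / (lam:ℝ) ^ (1/p) * (M + L) * Cg := rfl
end
end

section
/- Let N ∈ N and define the bilinear operator R_N(f,g) := Σ_{k=0}^{N-1} (-1)^k D^k f · D^{-k-1} g + D^{-1}( (-1)^N D^N f · D^{-N} g - ⨍_{T^d} fg ) for f ∈ C^∞(T^d) and g ∈ C_0^∞(T^d). Then div(R_N(f,g)) = fg - ⨍_{T^d} fg. -/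
open MeasureTheory Finset
open scoped ENNReal InnerProductSpace

noncomputable section

/-- The bilinear antidivergence operator
`ℛ_N(f,g) = ∑_{k<N} (-1)^k 𝒟^k f · 𝒟^{-k-1} g + 𝒟^{-1}((-1)^N 𝒟^N f · 𝒟^{-N} g - ⨍ fg)`,
written in terms of the Laplacian and the gradient. Here `G` encodes the antiderivatives of
`g` (namely `Δ^{⌈N/2⌉} G = g`, so `𝒟^{-2m} g = Δ^{⌈N/2⌉ - m} G` and
`𝒟^{-2m-1} g = ∇ Δ^{⌈N/2⌉ - m - 1} G`), and `uo` encodes the final antidivergence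
(`Δ uo = (-1)^N 𝒟^N f · 𝒟^{-N} g - ⨍ fg`, and `𝒟^{-1}(⋯) = ∇ uo`). -/
def RNop (d N : ℕ) (f G uo : Ed d → ℝ) : Ed d → Ed d :=
  fun x =>
    (∑ k ∈ Finset.range N,
      if Even k then
        ((-1 : ℝ) ^ k * (lap d)^[k / 2] f x) •
          gradient ((lap d)^[(N + 1) / 2 - k / 2 - 1] G) x
      else
        ((-1 : ℝ) ^ k * (lap d)^[(N + 1) / 2 - (k / 2 + 1)] G x) •
          gradient ((lap d)^[k / 2] f) x)
    + gradient uo x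

section Helpers

variable {d : ℕ}

private lemma grad_apply (h : Ed d → ℝ) (x : Ed d) (i : Fin d) :
    gradient h x i = fderiv ℝ h x (EuclideanSpace.single i (1:ℝ)) := by
  have : gradient h x i = ⟪gradient h x, EuclideanSpace.single i (1:ℝ)⟫_ℝ := by
    rw [EuclideanSpace.inner_single_right]; simp
  rw [this, gradient]
  simp [InnerProductSpace.toDual_symm_apply]

private lemma contDiff_gradient {h : Ed d → ℝ} (hh : ContDiff ℝ (⊤:ℕ∞) h) :
    ContDiff ℝ (⊤:ℕ∞) (gradient h) := by
  have : gradient h = fun x => (InnerProductSpace.toDual ℝ (Ed d)).symm (fderiv ℝ h x) := rfl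
  rw [this]
  exact (InnerProductSpace.toDual ℝ (Ed d)).symm.contDiff.comp
    (hh.fderiv_right (by exact_mod_cast le_refl _))

private lemma contDiff_lap {h : Ed d → ℝ} (hh : ContDiff ℝ (⊤:ℕ∞) h) :
    ContDiff ℝ (⊤:ℕ∞) (lap d h) := by
  unfold lap
  apply ContDiff.sum
  intro i _
  exact (ContinuousMultilinearMap.apply ℝ (fun _ : Fin 2 => Ed d) ℝ
      (fun _ => EuclideanSpace.single i (1:ℝ))).contDiff.comp
    (hh.iteratedFDeriv_right (by exact_mod_cast le_refl _))

private lemma contDiff_lap_iter {h : Ed d → ℝ} (hh : ContDiff ℝ (⊤:ℕ∞) h) (n : ℕ) :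
    ContDiff ℝ (⊤:ℕ∞) ((lap d)^[n] h) := by
  induction n with
  | zero => exact hh
  | succ n ih => rw [Function.iterate_succ_apply']; exact contDiff_lap ih

private lemma divg_gradient {h : Ed d → ℝ} (_hh : ContDiff ℝ (⊤:ℕ∞) h) (x : Ed d) :
    divg d (gradient h) x = lap d h x := by
  unfold divg lap
  refine Finset.sum_congr rfl fun i _ => ?_
  rw [iteratedFDeriv_two_apply]
  have hgr : gradient h = fun y =>
      (InnerProductSpace.toDual ℝ (Ed d)).symm (fderiv ℝ h y) := rfl
  rw [hgr]
  rw [show (fun y => (InnerProductSpace.toDual ℝ (Ed d)).symm (fderiv ℝ h y)) =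
      (⇑(InnerProductSpace.toDual ℝ (Ed d)).symm ∘ fun y => fderiv ℝ h y) from rfl]
  rw [(InnerProductSpace.toDual ℝ (Ed d)).symm.comp_fderiv]
  simp only [ContinuousLinearMap.coe_comp', Function.comp_apply,
    ContinuousLinearEquiv.coe_coe]
  have key : ∀ φ : Ed d →L[ℝ] ℝ,
      ((InnerProductSpace.toDual ℝ (Ed d)).symm φ) i = φ (EuclideanSpace.single i (1:ℝ)) := by
    intro φ
    have : ((InnerProductSpace.toDual ℝ (Ed d)).symm φ) i =
        ⟪(InnerProductSpace.toDual ℝ (Ed d)).symm φ, EuclideanSpace.single i (1:ℝ)⟫_ℝ := by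
      rw [EuclideanSpace.inner_single_right]; simp
    rw [this, InnerProductSpace.toDual_symm_apply]
  exact key _

private lemma divg_smul_gradient {a h : Ed d → ℝ} (ha : ContDiff ℝ (⊤:ℕ∞) a)
    (hh : ContDiff ℝ (⊤:ℕ∞) h) (x : Ed d) :
    divg d (fun y => a y • gradient h y) x
      = ⟪gradient a x, gradient h x⟫_ℝ + a x * lap d h x := by
  have hW : ContDiff ℝ (⊤:ℕ∞) (gradient h) := contDiff_gradient hh
  unfold divg
  have hfd : fderiv ℝ (fun y => a y • gradient h y) x
      = a x • fderiv ℝ (gradient h) x + (fderiv ℝ a x).smulRight (gradient h x) :=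
    fderiv_fun_smul (ha.differentiable (by simp)).differentiableAt
      (hW.differentiable (by simp)).differentiableAt
  simp only [hfd, ContinuousLinearMap.add_apply, ContinuousLinearMap.smul_apply,
    ContinuousLinearMap.smulRight_apply, PiLp.add_apply, PiLp.smul_apply, smul_eq_mul]
  rw [Finset.sum_add_distrib, add_comm]
  congr 1
  · rw [PiLp.inner_apply]
    refine Finset.sum_congr rfl fun i _ => ?_
    rw [grad_apply a x i]
    simp only [RCLike.inner_apply, starRingEnd_apply, star_trivial]
    ring
  · rw [← Finset.mul_sum]
    congr 1
    exact divg_gradient hh x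

private lemma gradient_const_mul {a : Ed d → ℝ} {x : Ed d} (ha : DifferentiableAt ℝ a x)
    (c : ℝ) : gradient (fun y => c * a y) x = c • gradient a x := by
  have : gradient (fun y => c * a y) x =
      (InnerProductSpace.toDual ℝ (Ed d)).symm (fderiv ℝ (fun y => c * a y) x) := rfl
  rw [this, fderiv_const_mul ha c, _root_.map_smul]
  rfl

private lemma divg_sum {ι : Type*} (s : Finset ι) (V : ι → Ed d → Ed d) (x : Ed d)
    (hV : ∀ k ∈ s, DifferentiableAt ℝ (V k) x) :
    divg d (fun y => ∑ k ∈ s, V k y) x = ∑ k ∈ s, divg d (V k) x := by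
  unfold divg
  rw [Finset.sum_comm]
  refine Finset.sum_congr rfl fun i _ => ?_
  rw [fderiv_fun_sum hV]
  simp only [ContinuousLinearMap.coe_sum', Finset.sum_apply]
  rw [WithLp.ofLp_sum]
  exact Finset.sum_apply i s _

private lemma divg_add (V W : Ed d → Ed d) (x : Ed d) (hV : DifferentiableAt ℝ V x)
    (hW : DifferentiableAt ℝ W x) :
    divg d (fun y => V y + W y) x = divg d V x + divg d W x := by
  unfold divg
  rw [← Finset.sum_add_distrib]
  refine Finset.sum_congr rfl fun i _ => ?_
  rw [fderiv_fun_add hV hW]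
  simp

private lemma tele (q : ℕ → ℝ) (N : ℕ) :
    ∑ k ∈ Finset.range N, (-1:ℝ)^k * (q k + q (k+1)) = q 0 - (-1:ℝ)^N * q N := by
  induction N with
  | zero => simp
  | succ n ih => rw [Finset.sum_range_succ, ih, pow_succ]; ring

/-- The `k`-th summand of `RNop`. -/
private def Tk (d N : ℕ) (f G : Ed d → ℝ) (k : ℕ) : Ed d → Ed d := fun y =>
  if Even k then
    ((-1 : ℝ) ^ k * (lap d)^[k / 2] f y) •
      gradient ((lap d)^[(N + 1) / 2 - k / 2 - 1] G) y
  else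
    ((-1 : ℝ) ^ k * (lap d)^[(N + 1) / 2 - (k / 2 + 1)] G y) •
      gradient ((lap d)^[k / 2] f) y

end Helpers

/-- **`ℛ_N` is an antidivergence:** `div (ℛ_N(f,g)) = fg - ⨍_{𝕋^d} fg` for
`f ∈ C^∞(𝕋^d)` and `g ∈ C₀^∞(𝕋^d)`. -/
theorem RN_antidivergence (d N : ℕ) (f g G uo : Ed d → ℝ)
    (hf : ContDiff ℝ (⊤ : ℕ∞) f) (hfp : PeriodicZd d f)
    (hg : ContDiff ℝ (⊤ : ℕ∞) g) (hgp : PeriodicZd d g)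
    (hgm : (∫ x, g x ∂(cubeVol d)) = 0)
    (hG : ContDiff ℝ (⊤ : ℕ∞) G) (hGp : PeriodicZd d G)
    (hGm : (∫ x, G x ∂(cubeVol d)) = 0)
    (hGeq : (lap d)^[(N + 1) / 2] G = g)
    (huo : ContDiff ℝ (⊤ : ℕ∞) uo) (huop : PeriodicZd d uo)
    (huoeq : ∀ x, lap d uo x =
      (-1 : ℝ) ^ N *
        (if Even N then (lap d)^[N / 2] f x * (lap d)^[(N + 1) / 2 - N / 2] G x
          else ⟪gradient ((lap d)^[N / 2] f) x, gradient G x⟫_ℝ)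
        - ⨍ y, f y * g y ∂(cubeVol d)) :
    ∀ x, divg d (RNop d N f G uo) x = f x * g x - ⨍ y, f y * g y ∂(cubeVol d) := by
  intro x
  have hTkc : ∀ k, ContDiff ℝ (⊤:ℕ∞) (Tk d N f G k) := by
    intro k
    unfold Tk
    by_cases hke : Even k
    · simp only [if_pos hke]
      exact (contDiff_const.mul (contDiff_lap_iter hf _)).smul
        (contDiff_gradient (contDiff_lap_iter hG _))
    · simp only [if_neg hke]
      exact (contDiff_const.mul (contDiff_lap_iter hG _)).smul
        (contDiff_gradient (contDiff_lap_iter hf _))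
  have hTkd : ∀ k, DifferentiableAt ℝ (Tk d N f G k) x := fun k =>
    ((hTkc k).differentiable (by simp)).differentiableAt
  have h1 : divg d (RNop d N f G uo) x
      = (∑ k ∈ Finset.range N, divg d (Tk d N f G k) x) + lap d uo x := by
    have e1 : RNop d N f G uo
        = fun y => (∑ k ∈ Finset.range N, Tk d N f G k y) + gradient uo y := rfl
    rw [e1, divg_add _ _ x (DifferentiableAt.fun_sum fun k _ => hTkd k)
        (((contDiff_gradient huo).differentiable (by simp)).differentiableAt),
      divg_sum _ _ x (fun k _ => hTkd k), divg_gradient huo x]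
  -- the sequence of pair products
  set q : ℕ → ℝ := fun k =>
    if Even k then (lap d)^[k / 2] f x * (lap d)^[(N + 1) / 2 - k / 2] G x
    else ⟪gradient ((lap d)^[k / 2] f) x,
      gradient ((lap d)^[(N + 1) / 2 - k / 2 - 1] G) x⟫_ℝ with hq
  have hdiv : ∀ k ∈ Finset.range N,
      divg d (Tk d N f G k) x = (-1:ℝ)^k * (q k + q (k+1)) := by
    intro k hkN
    rw [Finset.mem_range] at hkN
    by_cases hke : Even k
    · obtain ⟨j, rfl⟩ := hke
      have hTe : Tk d N f G (j + j) = fun y =>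
          (((-1:ℝ)^(j+j)) * (lap d)^[(j+j) / 2] f y) •
            gradient ((lap d)^[(N + 1) / 2 - (j+j) / 2 - 1] G) y := by
        funext y; simp only [Tk, if_pos (Even.add_self j)]
      rw [hTe]
      have hds := divg_smul_gradient
        (a := fun y => ((-1:ℝ)^(j+j)) * (lap d)^[(j+j)/2] f y)
        (h := (lap d)^[(N + 1) / 2 - (j+j) / 2 - 1] G)
        (contDiff_const.mul (contDiff_lap_iter hf _)) (contDiff_lap_iter hG _) x
      rw [hds, gradient_const_mul
        (((contDiff_lap_iter hf _).differentiable (by simp)).differentiableAt) _,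
        real_inner_smul_left]
      have e2 : lap d ((lap d)^[(N + 1) / 2 - (j+j) / 2 - 1] G)
          = (lap d)^[(N + 1) / 2 - (j+j) / 2] G := by
        conv_rhs => rw [show (N + 1) / 2 - (j+j) / 2
          = ((N + 1) / 2 - (j+j) / 2 - 1) + 1 from by omega]
        rw [Function.iterate_succ_apply']
      rw [e2]
      have hq1 : q (j + j) = (lap d)^[(j+j) / 2] f x * (lap d)^[(N + 1) / 2 - (j+j) / 2] G x := by
        rw [hq]; simp only [if_pos (Even.add_self j)]
      have hq2 : q (j + j + 1) = ⟪gradient ((lap d)^[(j+j) / 2] f) x,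
          gradient ((lap d)^[(N + 1) / 2 - (j+j) / 2 - 1] G) x⟫_ℝ := by
        have hne : ¬ Even (j + j + 1) := by simp [Nat.even_add_one, Even.add_self j]
        have hdd : (j + j + 1) / 2 = (j + j) / 2 := by omega
        rw [hq]; simp only [if_neg hne, hdd]
      rw [hq1, hq2]; ring
    · obtain ⟨j, hj⟩ := Nat.odd_iff.mpr (Nat.not_even_iff.mp hke)
      subst hj
      have hTo : Tk d N f G (2*j + 1) = fun y =>
          (((-1:ℝ)^(2*j+1)) * (lap d)^[(N + 1) / 2 - ((2*j+1) / 2 + 1)] G y) •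
            gradient ((lap d)^[(2*j+1) / 2] f) y := by
        funext y; simp only [Tk, if_neg hke]
      rw [hTo]
      have hds := divg_smul_gradient
        (a := fun y => ((-1:ℝ)^(2*j+1)) * (lap d)^[(N + 1) / 2 - ((2*j+1)/2 + 1)] G y)
        (h := (lap d)^[(2*j+1) / 2] f)
        (contDiff_const.mul (contDiff_lap_iter hG _)) (contDiff_lap_iter hf _) x
      rw [hds, gradient_const_mul
        (((contDiff_lap_iter hG _).differentiable (by simp)).differentiableAt) _,
        real_inner_smul_left]
      have e2 : lap d ((lap d)^[(2*j+1) / 2] f) = (lap d)^[(2*j+1) / 2 + 1] f := by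
        rw [Function.iterate_succ_apply']
      rw [e2]
      have hq1 : q (2*j + 1) = ⟪gradient ((lap d)^[(2*j+1) / 2] f) x,
          gradient ((lap d)^[(N + 1) / 2 - (2*j+1) / 2 - 1] G) x⟫_ℝ := by
        rw [hq]; simp only [if_neg hke]
      have hq2 : q (2*j + 1 + 1) = (lap d)^[(2*j+1) / 2 + 1] f x *
          (lap d)^[(N + 1) / 2 - ((2*j+1) / 2 + 1)] G x := by
        have he : Even (2*j + 1 + 1) := by exact ⟨j+1, by ring⟩
        have hdd : (2*j + 1 + 1) / 2 = (2*j+1) / 2 + 1 := by omega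
        rw [hq]; simp only [if_pos he, hdd]
      have hsub : (N + 1) / 2 - (2*j+1) / 2 - 1 = (N + 1) / 2 - ((2*j+1) / 2 + 1) := by omega
      rw [hq1, hq2, hsub, real_inner_comm]
      ring
  rw [h1, Finset.sum_congr rfl hdiv, tele q N, huoeq x]
  have hqN : (if Even N then (lap d)^[N / 2] f x * (lap d)^[(N + 1) / 2 - N / 2] G x
      else ⟪gradient ((lap d)^[N / 2] f) x, gradient G x⟫_ℝ) = q N := by
    by_cases hNe : Even N
    · rw [hq]; simp only [if_pos hNe]
    · have h0 : (N + 1) / 2 - N / 2 - 1 = 0 := by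
        have := Nat.odd_iff.mp (Nat.odd_iff.mpr (Nat.not_even_iff.mp hNe)); omega
      rw [hq]; simp only [if_neg hNe, h0, Function.iterate_zero_apply]
  have hq0 : q 0 = f x * g x := by
    rw [hq]; simp only [if_pos (Even.zero), Nat.zero_div, Nat.sub_zero,
      Function.iterate_zero_apply, hGeq]
  rw [hqN, hq0]
  ring
end
end
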